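/- For each K > 0, the set Y_K = {x ∈ ℝ/ℤ : liminf_{n→∞} (1/n) log₂ d(T^n x, x) < −K} has Hausdorff dimension at most 1/(K+1), where T(x) = 2x mod 1. Consequently, the set Y_∞ = {x : liminf_{n→∞} (1/n) log₂ d(T^n x, x) = −∞} has Hausdorff dimension zero. -/

import Mathlib

open Filter MeasureTheory Set Real
open scoped NNReal ENNReal

/-- The doubling map on the circle `ℝ/ℤ`. -/
noncomputable def double : AddCircle (1:ℝ) → AddCircle (1:ℝ) := fun z => z + z

lemma double_iter (y : ℝ) (n : ℕ) :
    double^[n] ((y : ℝ) : AddCircle (1:ℝ)) = ((2^n * y : ℝ) : AddCircle (1:ℝ)) := by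
  induction n with
  | zero => norm_num
  | succ n ih =>
    rw [Function.iterate_succ_apply', ih]
    show ((2^n * y : ℝ) : AddCircle (1:ℝ)) + ((2^n * y : ℝ) : AddCircle (1:ℝ)) = _
    rw [← AddCircle.coe_add]
    congr 1
    ring

lemma lip_coe : LipschitzWith 1 (fun y : ℝ => (y : AddCircle (1:ℝ))) := by
  apply LipschitzWith.mk_one
  intro a b
  rw [dist_eq_norm, dist_eq_norm, ← AddCircle.coe_sub]
  exact QuotientAddGroup.norm_mk_le_norm

lemma two_pow_sub_one_pos {n : ℕ} (hn : 1 ≤ n) : (0:ℝ) < 2^n - 1 := by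
  have : (2:ℝ)^1 ≤ 2^n := pow_le_pow_right₀ one_le_two hn
  norm_num at this ⊢; linarith

lemma hitting_ball {K : ℝ} (hK : 0 < K) {y : ℝ} (hy : y ∈ Set.Icc (0:ℝ) 1) {n : ℕ} (hn : 1 ≤ n)
    (h : dist (double^[n] ((y:ℝ) : AddCircle (1:ℝ))) ((y:ℝ) : AddCircle (1:ℝ)) ≤ (2:ℝ) ^ (-(K*n))) :
    ∃ j : ℕ, j < 2^n + 2 ∧
      y ∈ Metric.closedBall (((j:ℝ) - 1)/(2^n - 1)) ((2:ℝ)^(-(K*n)) / (2^n - 1)) := by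
  set δ : ℝ := (2:ℝ)^(-(K*n)) with hδ
  have hδ0 : 0 < δ := Real.rpow_pos_of_pos two_pos _
  have hδ1 : δ ≤ 1 := by
    apply Real.rpow_le_one_of_one_le_of_nonpos one_le_two
    have : (0:ℝ) ≤ K * n := mul_nonneg hK.le (Nat.cast_nonneg n)
    linarith
  set M : ℝ := 2^n - 1 with hM
  have hM0 : 0 < M := two_pow_sub_one_pos hn
  set z : ℝ := M * y with hz
  have hznorm : ‖((z:ℝ) : AddCircle (1:ℝ))‖ ≤ δ := by
    have h1 : dist (double^[n] ((y:ℝ) : AddCircle (1:ℝ))) ((y:ℝ) : AddCircle (1:ℝ))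
        = ‖((z:ℝ) : AddCircle (1:ℝ))‖ := by
      rw [double_iter, dist_eq_norm, ← AddCircle.coe_sub]
      congr 1
      rw [hz, hM]; ring
    rwa [h1] at h
  have hround : |z - round z| ≤ δ := by
    have := AddCircle.norm_eq (p := (1:ℝ)) (x := z)
    simp only [inv_one, one_mul, mul_one] at this
    rwa [this] at hznorm
  have hz0 : 0 ≤ z := mul_nonneg hM0.le hy.1
  have hzM : z ≤ M := by
    calc z = M * y := hz
    _ ≤ M * 1 := by nlinarith [hy.2]
    _ = M := mul_one M
  have habs := abs_le.mp hround
  have hjlow : (-1 : ℝ) ≤ round z := by linarith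
  have hjhigh : (round z : ℝ) ≤ 2^n := by
    have : (round z : ℝ) ≤ z + δ := by linarith
    rw [hM] at hzM; linarith
  have hjlow' : (-1 : ℤ) ≤ round z := by exact_mod_cast hjlow
  have hjhigh' : round z ≤ (2^n : ℤ) := by exact_mod_cast hjhigh
  refine ⟨(round z + 1).toNat, ?_, ?_⟩
  · have hc2 : ((2:ℤ))^n = ((2^n : ℕ) : ℤ) := by push_cast; ring
    rw [hc2] at hjhigh'
    omega
  · have hcast : (((round z + 1).toNat : ℝ)) - 1 = (round z : ℝ) := by
      have : ((round z + 1).toNat : ℤ) = round z + 1 := Int.toNat_of_nonneg (by omega)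
      have := congrArg (fun k : ℤ => (k : ℝ)) this
      push_cast at this
      linarith
    rw [Metric.mem_closedBall, hcast, Real.dist_eq]
    have heq : y - (round z:ℝ)/M = (z - round z)/M := by
      rw [hz]; field_simp
    rw [heq, abs_div, abs_of_pos hM0]
    gcongr

noncomputable def cover (K : ℝ) (n : ℕ) : (Σ _m : ℕ, Fin (2^(n+_m) + 2)) → Set ℝ := fun i =>
  Metric.closedBall ((((i.2 : ℕ) : ℝ) - 1)/(2^(n+i.1) - 1))
    ((2:ℝ)^(-(K*(n+i.1))) / (2^(n+i.1) - 1))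

lemma rpow_two_add (a b : ℝ) : (2:ℝ)^a * (2:ℝ)^b = (2:ℝ)^(a+b) :=
  (Real.rpow_add two_pos a b).symm

lemma diam_cb_le (c ρ : ℝ) : EMetric.diam (Metric.closedBall c ρ) ≤ ENNReal.ofReal (2*ρ) := by
  rcases lt_or_ge ρ 0 with h | h
  · rw [Metric.closedBall_eq_empty.mpr h]
    show Metric.ediam (∅ : Set ℝ) ≤ _
    simp
  · rw [← Metric.emetric_closedBall h]
    calc EMetric.diam (EMetric.closedBall c (ENNReal.ofReal ρ)) ≤ 2 * ENNReal.ofReal ρ :=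
          EMetric.diam_closedBall
      _ = ENNReal.ofReal (2*ρ) := by
          rw [ENNReal.ofReal_mul (by norm_num : (0:ℝ) ≤ 2)]; norm_num

lemma rad_bound {K : ℝ} (hK : 0 < K) (k : ℕ) :
    2 * ((2:ℝ)^(-(K*k)) / (2^k - 1)) ≤ (2:ℝ)^((2:ℝ) - (K+1)*k) := by
  rcases Nat.eq_zero_or_pos k with rfl | hk
  · norm_num
  · have hM0 : (0:ℝ) < 2^k - 1 := two_pow_sub_one_pos hk
    have hpow : (2:ℝ)^((k:ℝ) - 1) ≤ 2^k - 1 := by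
      have h1 : (2:ℝ) * 2^((k:ℝ)-1) = 2^((k:ℝ)) := by
        have h := rpow_two_add (1:ℝ) ((k:ℝ)-1)
        rw [Real.rpow_one] at h
        rw [h]; congr 1; ring
      have h2 : (1:ℝ) ≤ 2^((k:ℝ)-1) := by
        apply Real.one_le_rpow one_le_two
        have : (1:ℝ) ≤ (k:ℝ) := by exact_mod_cast hk
        linarith
      have h3 : (2:ℝ)^(k:ℝ) = (2:ℝ)^k := Real.rpow_natCast 2 k
      nlinarith
    have hp0 : (0:ℝ) < 2^((k:ℝ)-1) := Real.rpow_pos_of_pos two_pos _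
    have hδ0 : (0:ℝ) < (2:ℝ)^(-(K*k)) := Real.rpow_pos_of_pos two_pos _
    calc 2 * ((2:ℝ)^(-(K*k)) / (2^k - 1)) ≤ 2 * ((2:ℝ)^(-(K*k)) / (2^((k:ℝ)-1))) := by
          gcongr
      _ = (2:ℝ)^(1:ℝ) * ((2:ℝ)^(-(K*(k:ℝ))) * (2:ℝ)^(-((k:ℝ)-1))) := by
          rw [Real.rpow_one, div_eq_mul_inv, ← Real.rpow_neg two_pos.le]
      _ = (2:ℝ)^((1:ℝ) + (-(K*(k:ℝ)) + -((k:ℝ)-1))) := by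
          rw [rpow_two_add (-(K*(k:ℝ))) (-((k:ℝ)-1)), rpow_two_add 1 _]
      _ = (2:ℝ)^((2:ℝ) - (K+1)*k) := by congr 1; ring

lemma diam_cover_le {K : ℝ} (hK : 0 < K) (n : ℕ) (i : Σ _m : ℕ, Fin (2^(n+_m) + 2)) :
    EMetric.diam (cover K n i) ≤ ENNReal.ofReal ((2:ℝ)^((2:ℝ) - (K+1)*(n+i.1))) :=
  le_trans (diam_cb_le _ _) (ENNReal.ofReal_le_ofReal (by exact_mod_cast rad_bound hK (n+i.1)))

lemma tendsto_radius (K : ℝ) (hK : 0 < K) :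
    Filter.Tendsto (fun n : ℕ => ENNReal.ofReal ((2:ℝ)^((2:ℝ) - (K+1)*n))) Filter.atTop (nhds 0) := by
  have h1 : ∀ n : ℕ, ENNReal.ofReal ((2:ℝ)^((2:ℝ) - (K+1)*n))
      = ENNReal.ofReal (4 * ((2:ℝ)^(-(K+1)))^n) := by
    intro n
    congr 1
    rw [← Real.rpow_natCast ((2:ℝ)^(-(K+1))) n, ← Real.rpow_mul two_pos.le]
    rw [show (4:ℝ) = (2:ℝ)^(2:ℝ) by norm_num, rpow_two_add]
    congr 1; ring
  have h2 : Tendsto (fun n : ℕ => 4 * ((2:ℝ)^(-(K+1)))^n) atTop (nhds 0) := by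
    have := (tendsto_pow_atTop_nhds_zero_of_lt_one
      (Real.rpow_pos_of_pos two_pos (-(K+1))).le
      (Real.rpow_lt_one_of_one_lt_of_neg one_lt_two (show -(K+1) < 0 by linarith))).const_mul (4:ℝ)
    simpa using this
  simp only [h1]
  have := (ENNReal.continuous_ofReal.tendsto 0).comp h2
  simpa [Function.comp_def] using this

lemma measure_zero_aux {K : ℝ} (hK : 0 < K) {d : ℝ≥0} (hd : 1/(K+1) < (d:ℝ)) :
    μH[(d:ℝ)] {y : ℝ | y ∈ Set.Icc (0:ℝ) 1 ∧ ∀ N : ℕ, ∃ n, N ≤ n ∧ 1 ≤ n ∧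
      dist (double^[n] ((y:ℝ) : AddCircle (1:ℝ))) ((y:ℝ) : AddCircle (1:ℝ)) ≤ (2:ℝ)^(-(K*n))} = 0 := by
  have hK1 : (0:ℝ) < K + 1 := by linarith
  set c : ℝ := (K+1)*(d:ℝ) - 1 with hc
  have hc0 : 0 < c := by
    have := (div_lt_iff₀ hK1).mp hd
    rw [hc]; nlinarith
  set q : ℝ := (2:ℝ)^(-c) with hq
  have hq0 : 0 < q := Real.rpow_pos_of_pos two_pos _
  have hq1 : q < 1 := Real.rpow_lt_one_of_one_lt_of_neg one_lt_two (by linarith)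
  set A : ℝ := (2:ℝ)^((2:ℝ) + 2*(d:ℝ)) with hA
  have hA0 : 0 < A := Real.rpow_pos_of_pos two_pos _
  have hr : Tendsto (fun n : ℕ => ENNReal.ofReal ((2:ℝ)^((2:ℝ) - (K+1)*n))) atTop (nhds 0) :=
    tendsto_radius K hK
  -- covering property
  have hst : ∀ n : ℕ, {y : ℝ | y ∈ Set.Icc (0:ℝ) 1 ∧ ∀ N : ℕ, ∃ n', N ≤ n' ∧ 1 ≤ n' ∧
      dist (double^[n'] ((y:ℝ) : AddCircle (1:ℝ))) ((y:ℝ) : AddCircle (1:ℝ)) ≤ (2:ℝ)^(-(K*n'))}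
      ⊆ ⋃ i, cover K n i := by
    intro n y hy
    obtain ⟨n', hn'1, hn'2, hn'3⟩ := hy.2 n
    obtain ⟨j, hj, hjball⟩ := hitting_ball hK hy.1 hn'2 hn'3
    have hmn : n + (n' - n) = n' := by omega
    refine Set.mem_iUnion.mpr ⟨⟨n' - n, ⟨j, by rw [hmn]; exact hj⟩⟩, ?_⟩
    show y ∈ Metric.closedBall _ _
    simp only [cover]
    have hc2 : (n:ℝ) + ((n' - n : ℕ):ℝ) = (n':ℝ) := by
      rw [Nat.cast_sub hn'1]; ring
    rw [hmn, hc2]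
    exact hjball
  -- per-n sum bound
  have key : ∀ n : ℕ, ∑' i, EMetric.diam (cover K n i) ^ (d:ℝ) ≤
      ENNReal.ofReal (A * q^n) * (1 - ENNReal.ofReal q)⁻¹ := by
    intro n
    rw [ENNReal.tsum_sigma']
    have hterm : ∀ m : ℕ, ∑' j : Fin (2^(n+m) + 2), EMetric.diam (cover K n ⟨m, j⟩) ^ (d:ℝ)
        ≤ ENNReal.ofReal (A * q^n) * ENNReal.ofReal q ^ m := by
      intro m
      have hb : ∀ j : Fin (2^(n+m) + 2), EMetric.diam (cover K n ⟨m, j⟩) ^ (d:ℝ)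
          ≤ ENNReal.ofReal ((2:ℝ)^(((2:ℝ) - (K+1)*(n+m)) * (d:ℝ))) := by
        intro j
        calc EMetric.diam (cover K n ⟨m, j⟩) ^ (d:ℝ)
            ≤ (ENNReal.ofReal ((2:ℝ)^((2:ℝ) - (K+1)*(n+m)))) ^ (d:ℝ) := by
              apply ENNReal.rpow_le_rpow (diam_cover_le hK n ⟨m, j⟩) d.coe_nonneg
          _ = ENNReal.ofReal ((2:ℝ)^(((2:ℝ) - (K+1)*(n+m)) * (d:ℝ))) := by
              rw [Real.rpow_mul two_pos.le,
                ENNReal.ofReal_rpow_of_pos (Real.rpow_pos_of_pos two_pos _)]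
      calc ∑' j : Fin (2^(n+m) + 2), EMetric.diam (cover K n ⟨m, j⟩) ^ (d:ℝ)
          ≤ ∑' _j : Fin (2^(n+m) + 2), ENNReal.ofReal ((2:ℝ)^(((2:ℝ) - (K+1)*(n+m)) * (d:ℝ))) :=
            ENNReal.tsum_le_tsum hb
        _ = ((2^(n+m) + 2 : ℕ) : ℝ≥0∞) * ENNReal.ofReal ((2:ℝ)^(((2:ℝ) - (K+1)*(n+m)) * (d:ℝ))) := by
            rw [tsum_fintype]
            simp [Finset.sum_const, nsmul_eq_mul, Fintype.card_fin]
        _ ≤ ((2^(n+m+2) : ℕ) : ℝ≥0∞) * ENNReal.ofReal ((2:ℝ)^(((2:ℝ) - (K+1)*(n+m)) * (d:ℝ))) := by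
            have hcard : (2:ℕ)^(n+m)+2 ≤ 2^(n+m+2) := by
              have h1 : (1:ℕ) ≤ 2^(n+m) := Nat.one_le_two_pow
              have h2 : (2:ℕ)^(n+m+2) = 4 * 2^(n+m) := by ring
              omega
            first
              | (gcongr; exact_mod_cast Nat.cast_le.mpr hcard)
              | gcongr
        _ = ENNReal.ofReal ((2:ℝ)^(((n:ℝ)+(m:ℝ)+2)) * (2:ℝ)^(((2:ℝ) - (K+1)*(n+m)) * (d:ℝ))) := by
            rw [ENNReal.ofReal_mul (by positivity)]
            congr 1
            rw [← ENNReal.ofReal_natCast]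
            congr 1
            push_cast
            rw [← Real.rpow_natCast 2 (n+m+2)]
            congr 1
            push_cast
            ring
        _ = ENNReal.ofReal (A * q^n * q^m) := by
            congr 1
            rw [rpow_two_add]
            rw [hA, hq, ← Real.rpow_natCast ((2:ℝ)^(-c)) n, ← Real.rpow_natCast ((2:ℝ)^(-c)) m,
              ← Real.rpow_mul two_pos.le, ← Real.rpow_mul two_pos.le,
              rpow_two_add, rpow_two_add]
            congr 1
            rw [hc]
            push_cast
            ring
        _ = ENNReal.ofReal (A * q^n) * ENNReal.ofReal q ^ m := by
            rw [ENNReal.ofReal_mul (by positivity), ENNReal.ofReal_pow hq0.le]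
    calc ∑' m : ℕ, ∑' j : Fin (2^(n+m) + 2), EMetric.diam (cover K n ⟨m, j⟩) ^ (d:ℝ)
        ≤ ∑' m : ℕ, ENNReal.ofReal (A * q^n) * ENNReal.ofReal q ^ m :=
          ENNReal.tsum_le_tsum hterm
      _ = ENNReal.ofReal (A * q^n) * ∑' m : ℕ, ENNReal.ofReal q ^ m := ENNReal.tsum_mul_left
      _ = ENNReal.ofReal (A * q^n) * (1 - ENNReal.ofReal q)⁻¹ := by
          rw [ENNReal.tsum_geometric]
  -- apply the covering lemma
  have hμ := MeasureTheory.Measure.hausdorffMeasure_le_liminf_tsum (d:ℝ)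
    {y : ℝ | y ∈ Set.Icc (0:ℝ) 1 ∧ ∀ N : ℕ, ∃ n, N ≤ n ∧ 1 ≤ n ∧
      dist (double^[n] ((y:ℝ) : AddCircle (1:ℝ))) ((y:ℝ) : AddCircle (1:ℝ)) ≤ (2:ℝ)^(-(K*n))}
    (l := atTop) (fun n : ℕ => ENNReal.ofReal ((2:ℝ)^((2:ℝ) - (K+1)*n))) hr (fun n : ℕ => cover K n)
    (Eventually.of_forall fun n => fun i => by
      refine le_trans (diam_cover_le hK n i) (ENNReal.ofReal_le_ofReal ?_)
      apply Real.rpow_le_rpow_of_exponent_le one_le_two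
      have h5 : (0:ℝ) ≤ (i.1:ℝ) := Nat.cast_nonneg _
      nlinarith)
    (Eventually.of_forall hst)
  refine le_antisymm (le_trans hμ ?_) zero_le
  have hG : Tendsto (fun n : ℕ => ENNReal.ofReal (A * q^n) * (1 - ENNReal.ofReal q)⁻¹)
      atTop (nhds 0) := by
    have h1 : Tendsto (fun n : ℕ => ENNReal.ofReal (A * q^n)) atTop (nhds 0) := by
      have h2 : Tendsto (fun n : ℕ => A * q^n) atTop (nhds 0) := by
        simpa using (tendsto_pow_atTop_nhds_zero_of_lt_one hq0.le hq1).const_mul A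
      have := (ENNReal.continuous_ofReal.tendsto 0).comp h2
      simpa [Function.comp_def] using this
    have h3 : (1 - ENNReal.ofReal q)⁻¹ ≠ ⊤ := by
      simp only [Ne, ENNReal.inv_eq_top, tsub_eq_zero_iff_le, not_le]
      exact ENNReal.ofReal_lt_one.mpr hq1
    simpa using ENNReal.Tendsto.mul_const h1 (Or.inr h3)
  calc liminf (fun n : ℕ => ∑' i, EMetric.diam (cover K n i) ^ (d:ℝ)) atTop
      ≤ liminf (fun n : ℕ => ENNReal.ofReal (A * q^n) * (1 - ENNReal.ofReal q)⁻¹) atTop := by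
        apply liminf_le_liminf (Eventually.of_forall key)
    _ = 0 := hG.liminf_eq

lemma dimH_setK {K : ℝ} (hK : 0 < K) :
    dimH {x : AddCircle (1:ℝ) |
        Filter.liminf
          (fun n : ℕ => (((1 / n : ℝ) * Real.logb 2 (dist (double^[n] x) x) : ℝ) : EReal))
          Filter.atTop < ((-K : ℝ) : EReal)} ≤ ENNReal.ofReal (1 / (K + 1)) := by
  haveI : Fact ((0:ℝ) < 1) := ⟨zero_lt_one⟩
  set E : Set ℝ := {y : ℝ | y ∈ Set.Icc (0:ℝ) 1 ∧ ∀ N : ℕ, ∃ n, N ≤ n ∧ 1 ≤ n ∧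
      dist (double^[n] ((y:ℝ) : AddCircle (1:ℝ))) ((y:ℝ) : AddCircle (1:ℝ)) ≤ (2:ℝ)^(-(K*n))}
    with hE
  have hsub : {x : AddCircle (1:ℝ) |
      Filter.liminf
        (fun n : ℕ => (((1 / n : ℝ) * Real.logb 2 (dist (double^[n] x) x) : ℝ) : EReal))
        Filter.atTop < ((-K : ℝ) : EReal)} ⊆ (fun y : ℝ => (y : AddCircle (1:ℝ))) '' E := by
    intro x hx
    obtain ⟨y, hy, rfl⟩ := AddCircle.eq_coe_Ico x
    refine ⟨y, ⟨⟨hy.1, hy.2.le⟩, ?_⟩, rfl⟩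
    have hfreq : ∃ᶠ n : ℕ in atTop,
        (1 / (n:ℝ)) * Real.logb 2 (dist (double^[n] ((y:ℝ):AddCircle (1:ℝ))) ((y:ℝ):AddCircle (1:ℝ))) < -K := by
      have := Filter.frequently_lt_of_liminf_lt (f := atTop)
        (u := fun n : ℕ => (((1 / n : ℝ) * Real.logb 2
          (dist (double^[n] ((y:ℝ):AddCircle (1:ℝ))) ((y:ℝ):AddCircle (1:ℝ))) : ℝ) : EReal)) (h := hx)
      exact this.mono fun n hn => by exact EReal.coe_lt_coe_iff.mp hn
    intro N
    obtain ⟨n, hn, hlt⟩ := frequently_atTop.mp hfreq (max N 1)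
    set D : ℝ := dist (double^[n] ((y:ℝ):AddCircle (1:ℝ))) ((y:ℝ):AddCircle (1:ℝ)) with hD
    have hn1 : 1 ≤ n := le_trans (le_max_right N 1) hn
    have hnN : N ≤ n := le_trans (le_max_left N 1) hn
    have hnpos : (0:ℝ) < n := by exact_mod_cast hn1
    have hD0 : 0 < D := by
      rcases eq_or_lt_of_le (dist_nonneg (x := double^[n] ((y:ℝ):AddCircle (1:ℝ)))
        (y := ((y:ℝ):AddCircle (1:ℝ)))) with h0 | h0
      · exfalso
        rw [← hD] at h0
        rw [← h0] at hlt
        simp only [Real.logb_zero, mul_zero] at hlt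
        linarith
      · exact h0
    have hlog : Real.logb 2 D < -(K * n) := by
      have h1 : (1/(n:ℝ)) * Real.logb 2 D < -K := hlt
      have h2 : Real.logb 2 D = (n:ℝ) * ((1/(n:ℝ)) * Real.logb 2 D) := by
        field_simp
      rw [h2]
      calc (n:ℝ) * ((1/(n:ℝ)) * Real.logb 2 D) < (n:ℝ) * (-K) := by
            apply mul_lt_mul_of_pos_left h1 hnpos
        _ = -(K * n) := by ring
    exact ⟨n, hnN, hn1, le_of_lt ((Real.logb_lt_iff_lt_rpow one_lt_two hD0).mp hlog)⟩
  calc dimH {x : AddCircle (1:ℝ) |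
        Filter.liminf
          (fun n : ℕ => (((1 / n : ℝ) * Real.logb 2 (dist (double^[n] x) x) : ℝ) : EReal))
          Filter.atTop < ((-K : ℝ) : EReal)}
      ≤ dimH ((fun y : ℝ => (y : AddCircle (1:ℝ))) '' E) := dimH_mono hsub
    _ ≤ dimH E := lip_coe.dimH_image_le E
    _ ≤ ENNReal.ofReal (1 / (K + 1)) := by
        refine ENNReal.le_of_forall_pos_le_add fun ε hε _ => ?_
        have hK1 : (0:ℝ) < K + 1 := by linarith
        have hanon : (0:ℝ) ≤ 1/(K+1) := by positivity
        set a : ℝ≥0 := ⟨1/(K+1), hanon⟩ with ha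
        set d : ℝ≥0 := a + ε with hd'
        have hdgt : 1/(K+1) < (d:ℝ) := by
          rw [hd', NNReal.coe_add]
          have h2 : ((a : ℝ≥0) : ℝ) = 1/(K+1) := rfl
          have h3 : (0:ℝ) < ε := hε
          rw [h2]; linarith
        have hdim : dimH E ≤ (d : ℝ≥0∞) :=
          dimH_le_of_hausdorffMeasure_ne_top
            (by rw [measure_zero_aux hK hdgt]; exact ENNReal.zero_ne_top)
        refine le_trans hdim ?_
        have hofr : ENNReal.ofReal (1/(K+1)) = (a : ℝ≥0∞) := by
          rw [ENNReal.ofReal]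
          congr 1
          apply NNReal.coe_injective
          rw [Real.coe_toNNReal']
          exact max_eq_left hanon
        rw [hd', ENNReal.coe_add, hofr]

theorem stmt12 (K : ℝ) (hK : 0 < K) :
    dimH {x : AddCircle (1:ℝ) |
        Filter.liminf
          (fun n : ℕ => (((1 / n : ℝ) * Real.logb 2 (dist (double^[n] x) x) : ℝ) : EReal))
          Filter.atTop < ((-K : ℝ) : EReal)} ≤ ENNReal.ofReal (1 / (K + 1)) ∧
    dimH {x : AddCircle (1:ℝ) |
        Filter.liminf
          (fun n : ℕ => (((1 / n : ℝ) * Real.logb 2 (dist (double^[n] x) x) : ℝ) : EReal))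
          Filter.atTop = ⊥} = 0 := by
  refine ⟨dimH_setK hK, ?_⟩
  refine le_antisymm ?_ zero_le
  refine ENNReal.le_of_forall_pos_le_add fun ε hε _ => ?_
  rw [zero_add]
  have hε' : (0:ℝ) < ε := hε
  set L : ℝ := 1/(ε:ℝ) with hL
  have hL0 : 0 < L := by positivity
  have hsub : {x : AddCircle (1:ℝ) |
      Filter.liminf
        (fun n : ℕ => (((1 / n : ℝ) * Real.logb 2 (dist (double^[n] x) x) : ℝ) : EReal))
        Filter.atTop = ⊥} ⊆ {x : AddCircle (1:ℝ) |
      Filter.liminf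
        (fun n : ℕ => (((1 / n : ℝ) * Real.logb 2 (dist (double^[n] x) x) : ℝ) : EReal))
        Filter.atTop < ((-L : ℝ) : EReal)} := by
    intro x hx
    rw [Set.mem_setOf_eq] at hx ⊢
    rw [hx]
    exact EReal.bot_lt_coe _
  calc dimH {x : AddCircle (1:ℝ) |
        Filter.liminf
          (fun n : ℕ => (((1 / n : ℝ) * Real.logb 2 (dist (double^[n] x) x) : ℝ) : EReal))
          Filter.atTop = ⊥}
      ≤ dimH {x : AddCircle (1:ℝ) |
        Filter.liminf
          (fun n : ℕ => (((1 / n : ℝ) * Real.logb 2 (dist (double^[n] x) x) : ℝ) : EReal))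
          Filter.atTop < ((-L : ℝ) : EReal)} := dimH_mono hsub
    _ ≤ ENNReal.ofReal (1 / (L + 1)) := dimH_setK hL0
    _ ≤ (ε : ℝ≥0∞) := by
        have h1 : 1 / (L + 1) ≤ (ε:ℝ) := by
          rw [hL]
          rw [div_le_iff₀ (by positivity)]
          have h2 : (1:ℝ) = ε * (1/ε) := by field_simp
          nlinarith
        calc ENNReal.ofReal (1 / (L + 1)) ≤ ENNReal.ofReal (ε:ℝ) := ENNReal.ofReal_le_ofReal h1
          _ = (ε : ℝ≥0∞) := ENNReal.ofReal_coe_nnreal
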